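/- Let a₁⁺, a₂⁺, a₁⁻, a₂⁻ ≥ 0, σ² ≥ 0, μ ∈ ℝ, and let G⁺, G⁻ be (nonnegative Borel) measures on (0,∞) satisfying ∫ (1+t)^{−1} dG^±(t) < ∞, and define ψ(ξ) = (a₂⁺ ξ² − i a₁⁺ ξ) · ST(G⁺)(−iξ) + (a₂⁻ ξ² + i a₁⁻ ξ) · ST(G⁻)(iξ) + (σ²/2) ξ² − iμξ for ξ ∈ ℂ ∖ iℝ. Then for every q > 0 and every ξ ∈ ℂ with Re ξ ≠ 0, one has q + ψ(ξ) ≠ 0; i.e., for a Stieltjes–Lévy process the equation q + ψ(ξ) = 0 has no solution on ℂ ∖ iℝ. -/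

import Mathlib

open MeasureTheory Complex Set
open scoped ENNReal

/-- The Stieltjes transform `ST(G)(z) = ∫ (t + z)⁻¹ dG(t)` of a measure `G` on `(0,∞)`
(realized as a Borel measure on `ℝ`). -/
noncomputable def stieltjesTransform (G : Measure ℝ) (z : ℂ) : ℂ :=
  ∫ t : ℝ, ((t : ℂ) + z)⁻¹ ∂G

/-- The characteristic exponent of a Stieltjes–Lévy process:
`ψ(ξ) = (a₂⁺ξ² - ia₁⁺ξ)·ST(G⁺)(-iξ) + (a₂⁻ξ² + ia₁⁻ξ)·ST(G⁻)(iξ) + (σ²/2)ξ² - iμξ`. -/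
noncomputable def slPsi (a1p a2p a1m a2m sig2 μ : ℝ) (Gp Gm : Measure ℝ) (ξ : ℂ) : ℂ :=
  ((a2p : ℂ) * ξ ^ 2 - Complex.I * (a1p : ℂ) * ξ) * stieltjesTransform Gp (-Complex.I * ξ) +
    ((a2m : ℂ) * ξ ^ 2 + Complex.I * (a1m : ℂ) * ξ) * stieltjesTransform Gm (Complex.I * ξ) +
    ((sig2 / 2 : ℝ) : ℂ) * ξ ^ 2 - Complex.I * (μ : ℂ) * ξ

lemma mul_inv_re' (w v : ℂ) : (w * v⁻¹).re = (w.re * v.re + w.im * v.im) / Complex.normSq v := by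
  rw [Complex.mul_re, Complex.inv_re, Complex.inv_im]; ring

lemma st_integrable (G : Measure ℝ) (z : ℂ) (hz : z.im ≠ 0)
    (hsupp : G (Set.Iic 0) = 0)
    (hint : (∫⁻ t : ℝ, ENNReal.ofReal ((1 + t)⁻¹) ∂G) < ⊤) :
    Integrable (fun t : ℝ => ((t : ℂ) + z)⁻¹) G := by
  have hzabs : 0 < |z.im| := abs_pos.2 hz
  set C : ℝ := max 2 ((2 + 2 * |z.re|) / |z.im|) with hC
  have hC2 : (2:ℝ) ≤ C := le_max_left _ _
  have hC0 : 0 < C := lt_of_lt_of_le (by norm_num) hC2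
  have hne : ∀ t : ℝ, ((t : ℂ) + z) ≠ 0 := by
    intro t h
    apply hz
    have := congrArg Complex.im h
    simpa using this
  have hcont : Continuous fun t : ℝ => ((t : ℂ) + z)⁻¹ :=
    (Complex.continuous_ofReal.add continuous_const).inv₀ hne
  have hmeas : AEStronglyMeasurable (fun t : ℝ => ((t : ℂ) + z)⁻¹) G :=
    hcont.aestronglyMeasurable
  have hae : ∀ᵐ t ∂G, 0 < t := by
    rw [ae_iff]
    convert hsupp using 2
    ext t
    simp [not_lt]
  refine ⟨hmeas, ?_⟩
  have hbound : ∀ᵐ t : ℝ ∂G, ‖((t : ℂ) + z)⁻¹‖₊ ≤ ENNReal.ofReal (C * (1 + t)⁻¹) := by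
    filter_upwards [hae] with t ht
    have h1t : (0:ℝ) < 1 + t := by linarith
    have habs : 0 < ‖(t:ℂ) + z‖ := norm_pos_iff.2 (hne t)
    have him : |z.im| ≤ ‖(t:ℂ) + z‖ := by
      have := Complex.abs_im_le_norm ((t:ℂ) + z)
      simpa using this
    have hre : |t + z.re| ≤ ‖(t:ℂ) + z‖ := by
      have := Complex.abs_re_le_norm ((t:ℂ) + z)
      simpa using this
    have key : 1 + t ≤ C * ‖(t:ℂ) + z‖ := by
      by_cases hcase : 1 + t ≤ 2 + 2 * |z.re|
      · have hCge : (2 + 2 * |z.re|) / |z.im| ≤ C := le_max_right _ _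
        have : (2 + 2 * |z.re|) ≤ C * |z.im| := by
          rw [div_le_iff₀ hzabs] at hCge; linarith
        nlinarith [mul_le_mul_of_nonneg_left him hC0.le]
      · push_neg at hcase
        have h1 : t - |z.re| ≤ |t + z.re| := by
          have := abs_nonneg z.re
          have := neg_abs_le z.re
          cases abs_cases (t + z.re) with
          | inl h => rw [h.1]; linarith
          | inr h => rw [h.1]; linarith
        have h2 : (1 + t) / 2 ≤ t - |z.re| := by linarith
        nlinarith [mul_le_mul_of_nonneg_left (le_trans h2 (le_trans h1 hre)) hC0.le,
          mul_le_mul_of_nonneg_right hC2 habs.le]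
    have hnorm : ‖((t : ℂ) + z)⁻¹‖ ≤ C * (1 + t)⁻¹ := by
      rw [norm_inv]
      have h' : 1 / ‖(t:ℂ) + z‖ ≤ C / (1 + t) :=
        (div_le_div_iff₀ habs h1t).2 (by linarith)
      simpa [one_div, div_eq_mul_inv] using h'
    calc (‖((t : ℂ) + z)⁻¹‖₊ : ℝ≥0∞) = ENNReal.ofReal ‖((t : ℂ) + z)⁻¹‖ :=
          (ofReal_norm _).symm
      _ ≤ ENNReal.ofReal (C * (1 + t)⁻¹) := ENNReal.ofReal_le_ofReal hnorm
  rw [hasFiniteIntegral_def]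
  calc ∫⁻ t, ‖((t : ℂ) + z)⁻¹‖₊ ∂G ≤ ∫⁻ t, ENNReal.ofReal (C * (1 + t)⁻¹) ∂G :=
        lintegral_mono_ae hbound
    _ = ENNReal.ofReal C * ∫⁻ t, ENNReal.ofReal ((1 + t)⁻¹) ∂G := by
        simp_rw [ENNReal.ofReal_mul hC0.le]
        exact lintegral_const_mul' _ _ ENNReal.ofReal_ne_top
    _ < ⊤ := ENNReal.mul_lt_top ENNReal.ofReal_lt_top hint

theorem slPsi_no_zero_off_imaginary_axis
    (a1p a2p a1m a2m sig2 μ : ℝ)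
    (ha1p : 0 ≤ a1p) (ha2p : 0 ≤ a2p) (ha1m : 0 ≤ a1m) (ha2m : 0 ≤ a2m)
    (hsig2 : 0 ≤ sig2)
    (Gp Gm : Measure ℝ)
    (hGpSupp : Gp (Set.Iic 0) = 0) (hGmSupp : Gm (Set.Iic 0) = 0)
    (hGpInt : (∫⁻ t : ℝ, ENNReal.ofReal ((1 + t)⁻¹) ∂Gp) < ⊤)
    (hGmInt : (∫⁻ t : ℝ, ENNReal.ofReal ((1 + t)⁻¹) ∂Gm) < ⊤) :
    ∀ q : ℝ, 0 < q → ∀ ξ : ℂ, ξ.re ≠ 0 →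
      (q : ℂ) + slPsi a1p a2p a1m a2m sig2 μ Gp Gm ξ ≠ 0 := by
  intro q hq ξ hx h0
  set zp : ℂ := -Complex.I * ξ with hzp
  set zm : ℂ := Complex.I * ξ with hzm
  have hzpim : zp.im ≠ 0 := by simp [hzp, hx]
  have hzmim : zm.im ≠ 0 := by simp [hzm, hx]
  have hfp : Integrable (fun t : ℝ => ((t : ℂ) + zp)⁻¹) Gp :=
    st_integrable Gp zp hzpim hGpSupp hGpInt
  have hfm : Integrable (fun t : ℝ => ((t : ℂ) + zm)⁻¹) Gm :=
    st_integrable Gm zm hzmim hGmSupp hGmInt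
  set Ap : ℂ := (a2p : ℂ) * ξ ^ 2 - Complex.I * (a1p : ℂ) * ξ with hAp
  set Am : ℂ := (a2m : ℂ) * ξ ^ 2 + Complex.I * (a1m : ℂ) * ξ with hAm
  set c : ℂ := (starRingEnd ℂ) ξ with hc
  -- a.e. positivity
  have haep : ∀ᵐ t ∂Gp, (0:ℝ) < t := by
    rw [ae_iff]; convert hGpSupp using 2; ext t; simp [not_lt]
  have haem : ∀ᵐ t ∂Gm, (0:ℝ) < t := by
    rw [ae_iff]; convert hGmSupp using 2; ext t; simp [not_lt]
  -- pointwise real-part identities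
  have hptp : ∀ t : ℝ, ((Ap * c) * ((t : ℂ) + zp)⁻¹).re
      = ξ.re * (Complex.normSq ξ * (a2p * t + a1p) / Complex.normSq ((t : ℂ) + zp)) := by
    intro t
    rw [mul_inv_re']
    have h1 : ((t : ℂ) + zp).re = t + ξ.im := by simp [hzp]
    have h2 : ((t : ℂ) + zp).im = -ξ.re := by simp [hzp]
    have h3 : (Ap * c).re = Complex.normSq ξ * (a2p * ξ.re) := by
      simp [hAp, hc, Complex.mul_re, Complex.mul_im, Complex.normSq_apply, pow_two]
      ring
    have h4 : (Ap * c).im = Complex.normSq ξ * (a2p * ξ.im - a1p) := by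
      simp [hAp, hc, Complex.mul_re, Complex.mul_im, Complex.normSq_apply, pow_two]
      ring
    rw [h1, h2, h3, h4, mul_div_assoc]
    ring
  have hptm : ∀ t : ℝ, ((Am * c) * ((t : ℂ) + zm)⁻¹).re
      = ξ.re * (Complex.normSq ξ * (a2m * t + a1m) / Complex.normSq ((t : ℂ) + zm)) := by
    intro t
    rw [mul_inv_re']
    have h1 : ((t : ℂ) + zm).re = t - ξ.im := by simp [hzm]; ring
    have h2 : ((t : ℂ) + zm).im = ξ.re := by simp [hzm]
    have h3 : (Am * c).re = Complex.normSq ξ * (a2m * ξ.re) := by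
      simp [hAm, hc, Complex.mul_re, Complex.mul_im, Complex.normSq_apply, pow_two]
      ring
    have h4 : (Am * c).im = Complex.normSq ξ * (a2m * ξ.im + a1m) := by
      simp [hAm, hc, Complex.mul_re, Complex.mul_im, Complex.normSq_apply, pow_two]
      ring
    rw [h1, h2, h3, h4, mul_div_assoc]
    ring
  -- the real parts of the two transform terms
  set Sp : ℝ := ∫ t : ℝ, Complex.normSq ξ * (a2p * t + a1p) / Complex.normSq ((t : ℂ) + zp) ∂Gp
    with hSp
  set Sm : ℝ := ∫ t : ℝ, Complex.normSq ξ * (a2m * t + a1m) / Complex.normSq ((t : ℂ) + zm) ∂Gm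
    with hSm
  have hSpnn : 0 ≤ Sp := by
    refine integral_nonneg_of_ae ?_
    filter_upwards [haep] with t ht
    exact div_nonneg (mul_nonneg (Complex.normSq_nonneg _)
      (add_nonneg (mul_nonneg ha2p ht.le) ha1p)) (Complex.normSq_nonneg _)
  have hSmnn : 0 ≤ Sm := by
    refine integral_nonneg_of_ae ?_
    filter_upwards [haem] with t ht
    exact div_nonneg (mul_nonneg (Complex.normSq_nonneg _)
      (add_nonneg (mul_nonneg ha2m ht.le) ha1m)) (Complex.normSq_nonneg _)
  have hrep : ((Ap * c) * stieltjesTransform Gp zp).re = ξ.re * Sp := by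
    rw [stieltjesTransform, ← integral_const_mul (Ap * c) _]
    have hh := (integral_re (hfp.const_mul (Ap * c))).symm
    simp only [RCLike.re_to_complex] at hh
    rw [hh]
    simp_rw [hptp]
    rw [integral_const_mul]
  have hrem : ((Am * c) * stieltjesTransform Gm zm).re = ξ.re * Sm := by
    rw [stieltjesTransform, ← integral_const_mul (Am * c) _]
    have hh := (integral_re (hfm.const_mul (Am * c))).symm
    simp only [RCLike.re_to_complex] at hh
    rw [hh]
    simp_rw [hptm]
    rw [integral_const_mul]
  -- multiply the equation by conj ξ and take real parts
  have h0c : (((q : ℂ) + slPsi a1p a2p a1m a2m sig2 μ Gp Gm ξ) * c).re = 0 := by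
    rw [h0, zero_mul, Complex.zero_re]
  rw [slPsi] at h0c
  have hexp : (((q : ℂ) + (Ap * stieltjesTransform Gp zp + Am * stieltjesTransform Gm zm +
      ((sig2 / 2 : ℝ) : ℂ) * ξ ^ 2 - Complex.I * (μ : ℂ) * ξ)) * c)
      = (q : ℂ) * c + (Ap * c) * stieltjesTransform Gp zp + (Am * c) * stieltjesTransform Gm zm +
        ((sig2 / 2 : ℝ) : ℂ) * ξ ^ 2 * c - Complex.I * (μ : ℂ) * ξ * c := by ring
  rw [hexp] at h0c
  have hre1 : ((q : ℂ) * c).re = q * ξ.re := by simp [hc, Complex.mul_re]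
  have hre2 : (((sig2 / 2 : ℝ) : ℂ) * ξ ^ 2 * c).re
      = ξ.re * (sig2 / 2 * Complex.normSq ξ) := by
    simp [hc, Complex.mul_re, Complex.mul_im, Complex.normSq_apply, pow_two]
    ring
  have hre3 : (Complex.I * (μ : ℂ) * ξ * c).re = 0 := by
    simp [hc, Complex.mul_re, Complex.mul_im]
    ring
  simp only [Complex.add_re, Complex.sub_re] at h0c
  rw [hre1, hre2, hre3, hrep, hrem] at h0c
  have hfin : ξ.re * (q + Sp + Sm + sig2 / 2 * Complex.normSq ξ) = 0 := by
    rw [mul_add, mul_add, mul_add]; linarith [h0c]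
  have hpos : 0 < q + Sp + Sm + sig2 / 2 * Complex.normSq ξ := by
    have := mul_nonneg (div_nonneg hsig2 (by norm_num : (0:ℝ) ≤ 2)) (Complex.normSq_nonneg ξ)
    linarith
  exact hx (by
    rcases mul_eq_zero.1 hfin with h | h
    · exact h
    · exact absurd h hpos.ne')
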